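/- Soundness of the rule (Changes): if OnlyIf1 A (¬A) A' holds, then OnlyThrough A (¬A) A' holds. That is, if A' is a necessary precondition for the satisfaction of A to change in one step of execution, then along any finite execution that starts in a state satisfying A and ends in a state satisfying ¬A, some state of the execution satisfies A'. -/

import Mathlib

variable {S : Type*}

/-- A function `σ : Fin (n+1) → S` is a finite execution of the transition
relation `r` when consecutive states are related by `r`. -/
def IsExec (r : S → S → Prop) {n : ℕ} (σ : Fin (n + 1) → S) : Prop :=
  ∀ i : Fin n, r (σ i.castSucc) (σ i.succ)

/-- `OnlyIf1 r A₁ A₂ A₃`: for every single step `r σ σ'` with `A₁ σ` and `A₂ σ'`,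
we have `A₃ σ`. -/
def OnlyIf1 (r : S → S → Prop) (A₁ A₂ A₃ : S → Prop) : Prop :=
  ∀ σ σ' : S, r σ σ' → A₁ σ → A₂ σ' → A₃ σ

/-- `OnlyThrough r A₁ A₂ A₃`: every finite execution starting in an `A₁`-state and
ending in an `A₂`-state has some intermediate state satisfying `A₃`. -/
def OnlyThrough (r : S → S → Prop) (A₁ A₂ A₃ : S → Prop) : Prop :=
  ∀ (n : ℕ) (σ : Fin (n + 1) → S), IsExec r σ → A₁ (σ 0) → A₂ (σ (Fin.last n)) →
    ∃ i : Fin (n + 1), A₃ (σ i)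

/-- `OnlyIf r A₁ A₂ A₃`: every finite execution starting in an `A₁`-state and
ending in an `A₂`-state satisfies `A₃` at its first state. -/
def OnlyIf (r : S → S → Prop) (A₁ A₂ A₃ : S → Prop) : Prop :=
  ∀ (n : ℕ) (σ : Fin (n + 1) → S), IsExec r σ → A₁ (σ 0) → A₂ (σ (Fin.last n)) →
    A₃ (σ 0)

theorem changes_sound (r : S → S → Prop) (A A' : S → Prop)
    (h : OnlyIf1 r A (fun σ => ¬ A σ) A') :
    OnlyThrough r A (fun σ => ¬ A σ) A' := by
  intro n
  induction n with
  | zero =>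
    intro σ _ h0 hl
    exact absurd (show A (σ (Fin.last 0)) from h0) hl
  | succ n ih =>
    intro σ hexec h0 hl
    by_cases h1 : A (σ 1)
    · obtain ⟨i, hi⟩ := ih (fun j => σ j.succ)
        (fun i => by
          have := hexec i.succ
          simpa only [Fin.succ_castSucc] using this)
        (by simpa using h1)
        (by simpa [Fin.succ_last] using hl)
      exact ⟨i.succ, hi⟩
    · refine ⟨0, h (σ 0) (σ 1) ?_ h0 h1⟩
      have := hexec 0
      simpa using this
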